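/- For y ∈ [-1/2,1/2], y ≠ 0, let w = e^{2πiy} ≠ 1, and with κ, γ ≥ 0 small define Θ(k,ℓ) = iΩ(k,ℓ)/((1+κγ)Λ(k,ℓ) - iΩ(k,ℓ)), where Λ(k,ℓ) = 4[sin²(πk)+sin²(πℓ)] and Ω(k,ℓ) = 2[sin(2πk)+sin(2πℓ)]. Then the integral I(y) = ∫_{-1/2}^{1/2} Θ(y-x, x) dx equals ((1-w)/(w·a(w)))·[1 - 2(1+κγ)/√(δ(w))], where a(w) = 2 + κγ(1+w̄) and δ(w) = 4(1+κγ)(1-w) + (κγ)²(2-w-w̄), and √ is the principal square root. -/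

import Mathlib

open Real MeasureTheory

noncomputable def Lam (k l : ℝ) : ℝ := 4 * (Real.sin (π * k) ^ 2 + Real.sin (π * l) ^ 2)

noncomputable def Om (k l : ℝ) : ℝ := 2 * (Real.sin (2 * π * k) + Real.sin (2 * π * l))

/-- `Θ(k,ℓ) = iΩ(k,ℓ)/((1+a)Λ(k,ℓ) - iΩ(k,ℓ))` where `a = κγ`. -/
noncomputable def Theta (a : ℝ) (k l : ℝ) : ℂ :=
  (Complex.I * ((Om k l : ℝ) : ℂ)) /
    (((1 + a : ℝ) : ℂ) * ((Lam k l : ℝ) : ℂ) - Complex.I * ((Om k l : ℝ) : ℂ))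

noncomputable def aFn (a : ℝ) (w : ℂ) : ℂ := 2 + (a : ℂ) * (1 + (starRingEnd ℂ) w)

noncomputable def deltaFn (a : ℝ) (w : ℂ) : ℂ :=
  4 * (1 + (a : ℂ)) * (1 - w) + ((a : ℂ)) ^ 2 * (2 - w - (starRingEnd ℂ) w)

/- ### Auxiliary lemmas -/

noncomputable def Complex.abs : AbsoluteValue ℂ ℝ := IsAbsoluteValue.toAbsoluteValue (norm : ℂ → ℝ)

lemma Complex.abs_exp_ofReal_mul_I (x : ℝ) : Complex.abs (Complex.exp (x * Complex.I)) = 1 :=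
  Complex.norm_exp_ofReal_mul_I x

lemma Complex.re_le_abs (z : ℂ) : z.re ≤ Complex.abs z := Complex.re_le_norm z

lemma Complex.normSq_eq_abs (z : ℂ) : Complex.normSq z = Complex.abs z ^ 2 :=
  Complex.normSq_eq_norm_sq z

lemma Complex.abs_apply (z : ℂ) : Complex.abs z = Real.sqrt (Complex.normSq z) := by
  rw [Complex.normSq_eq_abs, Real.sqrt_sq (AbsoluteValue.nonneg _ _)]

lemma expz_abs (x : ℝ) : Complex.abs (Complex.exp (2 * (π:ℂ) * Complex.I * x)) = 1 := by
  have : (2 * (π:ℂ) * Complex.I * x) = ((2*π*x : ℝ) : ℂ) * Complex.I := by push_cast; ring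
  rw [this, Complex.abs_exp_ofReal_mul_I]

lemma cexp_comp_hasDeriv (k : ℂ) (x : ℝ) :
    HasDerivAt (fun t : ℝ => Complex.exp (k * t)) (k * Complex.exp (k * x)) x := by
  have h1 : HasDerivAt (fun z : ℂ => Complex.exp (k * z)) (k * Complex.exp (k * x)) (x:ℂ) := by
    have := ((hasDerivAt_id (x:ℂ)).const_mul k).cexp
    simpa [mul_comm] using this
  exact h1.comp_ofReal

lemma int_outer (c : ℂ) (hc : 1 < Complex.abs c) :
    ∫ x in (-(1:ℝ)/2)..(1/2), (Complex.exp (2 * (π:ℂ) * Complex.I * x) - c)⁻¹ = -c⁻¹ := by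
  have hc0 : c ≠ 0 := by intro h; simp [h] at hc; linarith
  have hne : ∀ x : ℝ, Complex.exp (2 * (π:ℂ) * Complex.I * x) - c ≠ 0 := by
    intro x h
    have := expz_abs x
    rw [sub_eq_zero] at h
    rw [h] at this; linarith
  set F : ℝ → ℂ := fun x => (2 * (π:ℂ) * Complex.I * c)⁻¹ *
      Complex.log (1 - Complex.exp (2 * (π:ℂ) * Complex.I * x) / c) - (x:ℂ) / c with hF
  have hg : ∀ x : ℝ, (1 - Complex.exp (2 * (π:ℂ) * Complex.I * x) / c).re > 0 := by
    intro x
    have h1 : (Complex.exp (2 * (π:ℂ) * Complex.I * x) / c).re ≤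
        Complex.abs (Complex.exp (2 * (π:ℂ) * Complex.I * x) / c) := Complex.re_le_abs _
    have h2 : Complex.abs (Complex.exp (2 * (π:ℂ) * Complex.I * x) / c) = 1 / Complex.abs c := by
      rw [map_div₀, expz_abs]
    have : 1 / Complex.abs c < 1 := by
      rw [div_lt_one (by linarith)]; exact hc
    simp only [Complex.sub_re, Complex.one_re]
    linarith [h1, h2 ▸ h1]
  have hderiv : ∀ x : ℝ, HasDerivAt F ((Complex.exp (2 * (π:ℂ) * Complex.I * x) - c)⁻¹) x := by
    intro x
    set z := Complex.exp (2 * (π:ℂ) * Complex.I * x) with hz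
    have hinner : HasDerivAt (fun t : ℝ => 1 - Complex.exp (2 * (π:ℂ) * Complex.I * t) / c)
        (-(2 * (π:ℂ) * Complex.I * z / c)) x := by
      have hed : HasDerivAt (fun t : ℝ => Complex.exp (2 * (π:ℂ) * Complex.I * t))
          (2 * (π:ℂ) * Complex.I * Complex.exp (2 * (π:ℂ) * Complex.I * x)) x :=
        cexp_comp_hasDeriv _ x
      simpa using ((hed.div_const c).const_sub 1)
    have hlog := hinner.clog_real (Or.inl (hg x))
    have hx : HasDerivAt (fun t : ℝ => (t:ℂ) / c) (1/c) x := by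
      simpa using ((hasDerivAt_id x).ofReal_comp).div_const c
    have := (hlog.const_mul ((2 * (π:ℂ) * Complex.I * c)⁻¹)).sub hx
    rw [← hz] at this
    refine this.congr_deriv (Eq.symm ?_)
    have hzc : z - c ≠ 0 := hne x
    have hcz : c - z ≠ 0 := sub_ne_zero.mpr (Ne.symm (sub_ne_zero.mp hzc))
    have h1c : (1 : ℂ) - z / c ≠ 0 := by
      rw [show (1:ℂ) - z/c = (c-z)/c from by field_simp]
      exact div_ne_zero hcz hc0
    have hπ : (π:ℂ) ≠ 0 := by exact_mod_cast Real.pi_ne_zero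
    rw [show (1:ℂ) - z/c = (c-z)/c from by field_simp]
    rw [div_div_eq_mul_div, ← neg_div, div_mul_cancel₀ _ hc0]
    have h2pi : (2*(π:ℂ)*Complex.I) ≠ 0 :=
      mul_ne_zero (mul_ne_zero two_ne_zero hπ) Complex.I_ne_zero
    rw [inv_mul_eq_div, div_div]
    rw [show (c-z)*(2*(π:ℂ)*Complex.I*c) = (2*(π:ℂ)*Complex.I) * (c*(c-z)) from by ring,
        show -(2*(π:ℂ)*Complex.I*z) = (2*(π:ℂ)*Complex.I) * (-z) from by ring,
        mul_div_mul_left _ _ h2pi]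
    rw [inv_eq_one_div, div_sub_div _ _ (mul_ne_zero hc0 hcz) hc0,
        div_eq_div_iff hzc (mul_ne_zero (mul_ne_zero hc0 hcz) hc0)]
    ring
  have hcont : Continuous fun x : ℝ => (Complex.exp (2 * (π:ℂ) * Complex.I * x) - c)⁻¹ := by
    apply Continuous.inv₀
    · exact (Complex.continuous_exp.comp (by continuity)).sub continuous_const
    · exact hne
  have hkey := intervalIntegral.integral_eq_sub_of_hasDerivAt (a := -(1:ℝ)/2) (b := (1:ℝ)/2)
    (f := F) (fun x _ => hderiv x) (hcont.intervalIntegrable _ _)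
  rw [hkey]
  have e1 : Complex.exp (2 * (π:ℂ) * Complex.I * ((1:ℝ)/2 : ℝ)) = -1 := by
    have : (2 * (π:ℂ) * Complex.I * ((1:ℝ)/2 : ℝ)) = π * Complex.I := by push_cast; ring
    rw [this, Complex.exp_pi_mul_I]
  have e2 : Complex.exp (2 * (π:ℂ) * Complex.I * ((-(1:ℝ)/2) : ℝ)) = -1 := by
    have : (2 * (π:ℂ) * Complex.I * ((-(1:ℝ)/2) : ℝ)) = -(π * Complex.I) := by push_cast; ring
    rw [this, Complex.exp_neg, Complex.exp_pi_mul_I]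
    norm_num
  simp only [hF, e1, e2]
  push_cast
  ring

lemma int_inner (c : ℂ) (hc0 : c ≠ 0) (hc : Complex.abs c < 1) :
    ∫ x in (-(1:ℝ)/2)..(1/2), (Complex.exp (2 * (π:ℂ) * Complex.I * x) - c)⁻¹ = 0 := by
  have habs : ∀ x : ℝ, Complex.abs (Complex.exp (-(2 * (π:ℂ) * Complex.I) * x)) = 1 := by
    intro x
    have : (-(2 * (π:ℂ) * Complex.I) * x) = ((-(2*π*x) : ℝ) : ℂ) * Complex.I := by push_cast; ring
    rw [this, Complex.abs_exp_ofReal_mul_I]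
  have hπ : (π:ℂ) ≠ 0 := by exact_mod_cast Real.pi_ne_zero
  have hne : ∀ x : ℝ, Complex.exp (2 * (π:ℂ) * Complex.I * x) - c ≠ 0 := by
    intro x h
    rw [sub_eq_zero] at h
    rw [← h] at hc
    rw [expz_abs x] at hc; linarith
  have hg : ∀ x : ℝ, (1 - c * Complex.exp (-(2 * (π:ℂ) * Complex.I) * x)).re > 0 := by
    intro x
    have h1 : (c * Complex.exp (-(2 * (π:ℂ) * Complex.I) * x)).re ≤
        Complex.abs (c * Complex.exp (-(2 * (π:ℂ) * Complex.I) * x)) := Complex.re_le_abs _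
    have h2 : Complex.abs (c * Complex.exp (-(2 * (π:ℂ) * Complex.I) * x)) = Complex.abs c := by
      rw [map_mul, habs x, mul_one]
    simp only [Complex.sub_re, Complex.one_re]
    linarith [h2 ▸ h1]
  set F : ℝ → ℂ := fun x => (2 * (π:ℂ) * Complex.I * c)⁻¹ *
      Complex.log (1 - c * Complex.exp (-(2 * (π:ℂ) * Complex.I) * x)) with hF
  have hderiv : ∀ x : ℝ, HasDerivAt F ((Complex.exp (2 * (π:ℂ) * Complex.I * x) - c)⁻¹) x := by
    intro x
    have hinner : HasDerivAt (fun t : ℝ => 1 - c * Complex.exp (-(2 * (π:ℂ) * Complex.I) * t))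
        (-(c * (-(2 * (π:ℂ) * Complex.I) * Complex.exp (-(2 * (π:ℂ) * Complex.I) * x)))) x := by
      simpa [mul_comm, mul_assoc] using
        (((cexp_comp_hasDeriv (-(2 * (π:ℂ) * Complex.I)) x).const_mul c).const_sub 1)
    have hlog := hinner.clog_real (Or.inl (hg x))
    have := hlog.const_mul ((2 * (π:ℂ) * Complex.I * c)⁻¹)
    refine this.congr_deriv (Eq.symm ?_)
    set E := Complex.exp (2 * (π:ℂ) * Complex.I * x) with hE
    have hEinv : Complex.exp (-(2 * (π:ℂ) * Complex.I) * x) = E⁻¹ := by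
      rw [hE, ← Complex.exp_neg]; congr 1; ring
    have hE0 : E ≠ 0 := Complex.exp_ne_zero _
    have hEc : E - c ≠ 0 := hne x
    rw [hEinv]
    have hgE : (1 : ℂ) - c * E⁻¹ = (E - c) / E := by field_simp
    rw [hgE]
    rw [show -(c * (-(2 * (π:ℂ) * Complex.I) * E⁻¹)) = (2 * (π:ℂ) * Complex.I) * c * E⁻¹ from by ring]
    rw [div_div_eq_mul_div]
    rw [show 2 * (π:ℂ) * Complex.I * c * E⁻¹ * E = 2 * (π:ℂ) * Complex.I * c from by
      field_simp]
    rw [inv_mul_eq_div, div_div]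
    rw [mul_comm (E - c) (2 * (π:ℂ) * Complex.I * c)]
    rw [div_mul_cancel_left₀
      (mul_ne_zero (mul_ne_zero (mul_ne_zero two_ne_zero hπ) Complex.I_ne_zero) hc0)]
  have hcont : Continuous fun x : ℝ => (Complex.exp (2 * (π:ℂ) * Complex.I * x) - c)⁻¹ := by
    apply Continuous.inv₀
    · exact (Complex.continuous_exp.comp (by continuity)).sub continuous_const
    · exact hne
  have hkey := intervalIntegral.integral_eq_sub_of_hasDerivAt (a := -(1:ℝ)/2) (b := (1:ℝ)/2)
    (f := F) (fun x _ => hderiv x) (hcont.intervalIntegrable _ _)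
  rw [hkey]
  have e1 : Complex.exp (-(2 * (π:ℂ) * Complex.I) * ((1:ℝ)/2 : ℝ)) = -1 := by
    have : (-(2 * (π:ℂ) * Complex.I) * ((1:ℝ)/2 : ℝ)) = -(π * Complex.I) := by push_cast; ring
    rw [this, Complex.exp_neg, Complex.exp_pi_mul_I]; norm_num
  have e2 : Complex.exp (-(2 * (π:ℂ) * Complex.I) * ((-(1:ℝ)/2) : ℝ)) = -1 := by
    have : (-(2 * (π:ℂ) * Complex.I) * ((-(1:ℝ)/2) : ℝ)) = π * Complex.I := by push_cast; ring
    rw [this, Complex.exp_pi_mul_I]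
  simp only [hF, e1, e2]
  ring

lemma cos_exp_form (t : ℝ) : ((Real.cos t : ℝ) : ℂ)
    = (Complex.exp ((t:ℂ) * Complex.I) + Complex.exp (-(t:ℂ) * Complex.I)) / 2 := by
  rw [Complex.ofReal_cos]; rfl

lemma I_sin_exp_form (t : ℝ) : Complex.I * ((Real.sin t : ℝ) : ℂ)
    = (Complex.exp ((t:ℂ) * Complex.I) - Complex.exp (-(t:ℂ) * Complex.I)) / 2 := by
  rw [Complex.ofReal_sin]
  rw [show Complex.sin (t:ℂ) =
    (Complex.exp (-(t:ℂ) * Complex.I) - Complex.exp ((t:ℂ) * Complex.I)) * Complex.I / 2 from rfl]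
  linear_combination ((Complex.exp (-(t:ℂ) * Complex.I) - Complex.exp ((t:ℂ) * Complex.I))/2)
    * Complex.I_sq

lemma lam_exp (y x : ℝ) (w z : ℂ) (hw : w = Complex.exp (2 * (π:ℂ) * Complex.I * y))
    (hz : z = Complex.exp (2 * (π:ℂ) * Complex.I * x)) :
    ((Lam (y - x) x : ℝ) : ℂ) = 4 - w * z⁻¹ - z * w⁻¹ - z - z⁻¹ := by
  have h : Lam (y - x) x = 4 - 2 * Real.cos (2*π*(y-x)) - 2 * Real.cos (2*π*x) := by
    rw [Lam, Real.sin_sq_eq_half_sub, Real.sin_sq_eq_half_sub,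
        show 2*(π*(y-x)) = 2*π*(y-x) from by ring, show 2*(π*x) = 2*π*x from by ring]
    ring
  have e1 : Complex.exp (((2*π*(y-x) : ℝ):ℂ) * Complex.I) = w * z⁻¹ := by
    rw [hw, hz, ← Complex.exp_neg, ← Complex.exp_add]; congr 1; push_cast; ring
  have e1' : Complex.exp (-((2*π*(y-x) : ℝ):ℂ) * Complex.I) = z * w⁻¹ := by
    rw [hw, hz, ← Complex.exp_neg, ← Complex.exp_add]; congr 1; push_cast; ring
  have e2 : Complex.exp (((2*π*x : ℝ):ℂ) * Complex.I) = z := by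
    rw [hz]; congr 1; push_cast; ring
  have e2' : Complex.exp (-((2*π*x : ℝ):ℂ) * Complex.I) = z⁻¹ := by
    rw [hz, ← Complex.exp_neg]; congr 1; push_cast; ring
  calc ((Lam (y - x) x : ℝ) : ℂ)
      = 4 - 2*((Real.cos (2*π*(y-x)) : ℝ):ℂ) - 2*((Real.cos (2*π*x) : ℝ):ℂ) := by
        rw [h]; push_cast; ring
    _ = 4 - w * z⁻¹ - z * w⁻¹ - z - z⁻¹ := by
        rw [cos_exp_form, cos_exp_form, e1, e1', e2, e2']; ring

lemma om_exp (y x : ℝ) (w z : ℂ) (hw : w = Complex.exp (2 * (π:ℂ) * Complex.I * y))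
    (hz : z = Complex.exp (2 * (π:ℂ) * Complex.I * x)) :
    Complex.I * ((Om (y - x) x : ℝ) : ℂ) = w * z⁻¹ - z * w⁻¹ + z - z⁻¹ := by
  have e1 : Complex.exp (((2*π*(y-x) : ℝ):ℂ) * Complex.I) = w * z⁻¹ := by
    rw [hw, hz, ← Complex.exp_neg, ← Complex.exp_add]; congr 1; push_cast; ring
  have e1' : Complex.exp (-((2*π*(y-x) : ℝ):ℂ) * Complex.I) = z * w⁻¹ := by
    rw [hw, hz, ← Complex.exp_neg, ← Complex.exp_add]; congr 1; push_cast; ring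
  have e2 : Complex.exp (((2*π*x : ℝ):ℂ) * Complex.I) = z := by
    rw [hz]; congr 1; push_cast; ring
  have e2' : Complex.exp (-((2*π*x : ℝ):ℂ) * Complex.I) = z⁻¹ := by
    rw [hz, ← Complex.exp_neg]; congr 1; push_cast; ring
  calc Complex.I * ((Om (y - x) x : ℝ) : ℂ)
      = 2*(Complex.I * ((Real.sin (2*π*(y-x)) : ℝ):ℂ))
        + 2*(Complex.I * ((Real.sin (2*π*x) : ℝ):ℂ)) := by
        rw [Om]; push_cast; ring
    _ = w * z⁻¹ - z * w⁻¹ + z - z⁻¹ := by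
        rw [I_sin_exp_form, I_sin_exp_form, e1, e1', e2, e2']; ring

lemma Dfac_aux (a w wi z zi S zp zm : ℂ) (hww : w * wi = 1) (hzz : z * zi = 1)
    (hS : (2 + a*(1+wi)) * S = 4*(1+a)) (hfac : (z - zp)*(z - zm) = z^2 - S*z + w) :
    (1+a)*(4 - w*zi - z*wi - z - zi) - (w*zi - z*wi + z - zi)
      = -((2 + a*(1+wi))*zi)*((z - zp)*(z - zm)) := by
  rw [hfac]
  linear_combination ((2+a)*z + a*z*wi - 4*(1+a)) * hzz + (a*zi) * hww + (-(z*zi)) * hS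

set_option maxHeartbeats 1000000 in
/-- Residue-theorem evaluation of `I(y) = ∫ Θ(y-x,x) dx`. -/
theorem stmt_11 (κ γ : ℝ) (hκ : 0 ≤ κ) (hγ : 0 ≤ γ) (y : ℝ)
    (hy : y ∈ Set.Icc (-(1:ℝ)/2) (1/2)) (hy0 : y ≠ 0)
    (hden : ∀ x : ℝ,
      ((1 + κ * γ : ℝ) : ℂ) * ((Lam (y - x) x : ℝ) : ℂ)
        - Complex.I * ((Om (y - x) x : ℝ) : ℂ) ≠ 0)
    (w : ℂ) (hw : w = Complex.exp (2 * (π : ℂ) * Complex.I * (y : ℂ))) :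
    (∫ x in (-(1:ℝ)/2)..(1/2), Theta (κ * γ) (y - x) x)
      = ((1 - w) / (w * aFn (κ * γ) w))
          * (1 - 2 * (1 + (κ * γ : ℝ)) / (deltaFn (κ * γ) w) ^ ((1 : ℂ)/2)) := by
  have hπ : (π:ℂ) ≠ 0 := by exact_mod_cast Real.pi_ne_zero
  have ha' : (0:ℝ) ≤ κ * γ := mul_nonneg hκ hγ
  obtain ⟨a, haDef⟩ : ∃ a : ℝ, a = κ * γ := ⟨_, rfl⟩
  rw [← haDef] at hden ⊢
  have ha : (0:ℝ) ≤ a := haDef ▸ ha'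
  -- basic facts about w
  have habsw : Complex.abs w = 1 := by
    rw [hw, show 2*(π:ℂ)*Complex.I*(y:ℂ) = ((2*π*y : ℝ):ℂ)*Complex.I from by push_cast; ring,
      Complex.abs_exp_ofReal_mul_I]
  have hw0 : w ≠ 0 := by rw [hw]; exact Complex.exp_ne_zero _
  have hwne1 : w ≠ 1 := by
    rw [hw]; intro h
    rw [Complex.exp_eq_one_iff] at h
    obtain ⟨n, hn⟩ := h
    have h2pi : (2*(π:ℂ)*Complex.I) ≠ 0 :=
      mul_ne_zero (mul_ne_zero two_ne_zero hπ) Complex.I_ne_zero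
    have hyn : (y:ℂ) = (n:ℂ) := by
      apply mul_left_cancel₀ h2pi
      rw [show (2*(π:ℂ)*Complex.I) * (n:ℂ) = (n:ℂ) * (2*(π:ℂ)*Complex.I) from by ring]
      exact hn
    have hyn' : y = (n:ℝ) := by exact_mod_cast hyn
    rcases hy with ⟨hyl, hyr⟩
    have hn0 : n ≠ 0 := by
      intro h0; rw [h0] at hyn'; simp at hyn'; exact hy0 hyn'
    have : (1:ℝ) ≤ |(n:ℝ)| := by exact_mod_cast Int.one_le_abs hn0
    rw [← hyn'] at this
    rcases abs_cases y with ⟨h1, _⟩ | ⟨h1, _⟩ <;> linarith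
  have hnormw : w.re^2 + w.im^2 = 1 := by
    have h2 : Complex.normSq w = 1 := by
      rw [Complex.normSq_eq_abs, habsw]; norm_num
    rw [Complex.normSq_apply] at h2; nlinarith [h2]
  have hwre1 : w.re < 1 := by
    have h1 : w.re ≤ 1 := by have := Complex.re_le_abs w; rwa [habsw] at this
    rcases h1.lt_or_eq with h | h
    · exact h
    · exfalso; apply hwne1
      have him : w.im = 0 := by nlinarith [hnormw]
      apply Complex.ext <;> simp [h, him]
  have hwrge : (-1:ℝ) ≤ w.re := by nlinarith [hnormw, sq_nonneg w.im]
  have hconj : (starRingEnd ℂ) w = w⁻¹ := (Complex.inv_eq_conj habsw).symm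
  -- a(w)
  obtain ⟨aw, hawDef⟩ : ∃ aw : ℂ, aw = aFn a w := ⟨_, rfl⟩
  have hawval : aw = 2 + (a:ℂ) * (1 + w⁻¹) := by rw [hawDef, aFn, hconj]
  have hnsaw : Complex.normSq aw = (2 + a*(1+w.re))^2 + (a*w.im)^2 := by
    rw [hawDef]
    simp [aFn, Complex.normSq_apply, Complex.add_re, Complex.add_im, Complex.mul_re,
      Complex.mul_im, Complex.conj_re, Complex.conj_im]
    ring
  have hnsaw4 : (4:ℝ) ≤ Complex.normSq aw := by
    rw [hnsaw]; nlinarith [hnormw, hwrge, sq_nonneg (a*w.im), sq_nonneg (a*(1+w.re))]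
  have haw0 : aw ≠ 0 := by
    intro h; rw [h] at hnsaw4; simp at hnsaw4; linarith
  -- δ(w)
  obtain ⟨dl, hdlDef⟩ : ∃ dl : ℂ, dl = deltaFn a w := ⟨_, rfl⟩
  have hdlre : dl.re = 4*(1+a)*(1-w.re) + a^2*(2 - 2*w.re) := by
    rw [hdlDef]
    simp only [deltaFn, Complex.add_re, Complex.sub_re, Complex.mul_re, Complex.mul_im,
      Complex.add_im, Complex.sub_im, Complex.one_re, Complex.one_im,
      Complex.conj_re, Complex.conj_im, Complex.ofReal_re, Complex.ofReal_im,
      Complex.re_ofNat, Complex.im_ofNat, ← Complex.ofReal_pow]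
    ring
  have hdlrepos : 0 < dl.re := by rw [hdlre]; nlinarith
  have hdl0 : dl ≠ 0 := by
    intro h; rw [h] at hdlrepos; simp at hdlrepos
  obtain ⟨rt, hrtDef⟩ : ∃ rt : ℂ, rt = dl ^ ((1:ℂ)/2) := ⟨_, rfl⟩
  have hrt2 : rt * rt = dl := by
    rw [hrtDef, ← Complex.cpow_add _ _ hdl0]; norm_num
  have hrt0 : rt ≠ 0 := by
    intro h; apply hdl0; rw [← hrt2, h, mul_zero]
  have hrtre : 0 ≤ rt.re := by
    rw [hrtDef, Complex.cpow_def_of_ne_zero hdl0, Complex.exp_re]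
    apply mul_nonneg (Real.exp_nonneg _)
    apply Real.cos_nonneg_of_mem_Icc
    have harg := Complex.arg_mem_Ioc dl
    rcases harg with ⟨hl, hr⟩
    have hpi := Real.pi_pos
    have him : (Complex.log dl * ((1:ℂ)/2)).im = (Complex.log dl).im / 2 := by
      simp [Complex.mul_im]
      ring
    refine Set.mem_Icc.mpr ⟨?_, ?_⟩ <;>
      rw [him, Complex.log_im] <;> linarith
  have hnsrt : Complex.normSq rt = Complex.abs dl := by
    have h1 : Complex.abs rt * Complex.abs rt = Complex.abs dl := by
      rw [← map_mul, hrt2]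
    rw [Complex.normSq_eq_abs, pow_two]; exact h1
  -- key inequality
  have hkey : Complex.normSq aw < Complex.normSq (2*(1+(a:ℂ)) + rt) := by
    have h1 : Complex.normSq (2*(1+(a:ℂ)) + rt) = (2+2*a+rt.re)^2 + rt.im^2 := by
      simp [Complex.normSq_apply, Complex.add_re, Complex.add_im, Complex.mul_re,
        Complex.mul_im, Complex.ofReal_re, Complex.ofReal_im]
      ring
    have h2 : rt.re^2 + rt.im^2 = Complex.abs dl := by
      rw [← hnsrt, Complex.normSq_apply]; ring
    have h3 : dl.re ≤ Complex.abs dl := Complex.re_le_abs dl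
    rw [h1, hnsaw]
    nlinarith [hnormw, hwrge, hwre1, hrtre, hdlre, h2, h3, sq_nonneg (a*w.im), ha]
  -- the roots
  obtain ⟨zp, hzpDef⟩ : ∃ zp : ℂ, zp = (2*(1+(a:ℂ)) + rt) / aw := ⟨_, rfl⟩
  obtain ⟨zm, hzmDef⟩ : ∃ zm : ℂ, zm = (2*(1+(a:ℂ)) - rt) / aw := ⟨_, rfl⟩
  have habszp : 1 < Complex.abs zp := by
    rw [hzpDef, map_div₀]
    rw [lt_div_iff₀ (Complex.abs.pos haw0), one_mul]
    have h1 : Complex.abs aw = Real.sqrt (Complex.normSq aw) := by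
      rw [Complex.abs_apply]
    have h2 : Complex.abs (2*(1+(a:ℂ)) + rt) = Real.sqrt (Complex.normSq (2*(1+(a:ℂ)) + rt)) := by
      rw [Complex.abs_apply]
    rw [h1, h2]
    exact Real.sqrt_lt_sqrt (Complex.normSq_nonneg _) hkey
  have hzp0 : zp ≠ 0 := by
    intro h; rw [h] at habszp; simp at habszp; linarith
  have hprodkey : 4*(1+(a:ℂ))^2 - dl = w * aw^2 := by
    rw [hawval, hdlDef, deltaFn, hconj]
    field_simp
    ring
  have hprod : zp * zm = w := by
    have h4 : zp * zm = (4*(1+(a:ℂ))^2 - dl) / aw^2 := by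
      rw [hzpDef, hzmDef, div_mul_div_comm,
        show (2*(1+(a:ℂ)) + rt) * (2*(1+(a:ℂ)) - rt) = 4*(1+(a:ℂ))^2 - rt*rt from by ring,
        hrt2, show aw * aw = aw^2 from by ring]
    rw [h4, hprodkey]
    exact mul_div_cancel_right₀ w (pow_ne_zero 2 haw0)
  have hsum : zp + zm = 4*(1+(a:ℂ))/aw := by
    rw [hzpDef, hzmDef, ← add_div]; congr 1; ring
  have hdiff : zp - zm = 2*rt/aw := by
    rw [hzpDef, hzmDef, div_sub_div_same]; congr 1; ring
  have hzm0 : zm ≠ 0 := by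
    intro h; apply hw0; rw [← hprod, h, mul_zero]
  have habszm : Complex.abs zm < 1 := by
    have h1 : Complex.abs zp * Complex.abs zm = 1 := by rw [← map_mul, hprod, habsw]
    nlinarith [AbsoluteValue.nonneg Complex.abs zm]
  have hzpzm : zp ≠ zm := by
    intro h
    have h1 : zp - zm = 0 := by rw [h, sub_self]
    rw [hdiff] at h1
    rw [div_eq_zero_iff] at h1
    rcases h1 with h1 | h1
    · rcases mul_eq_zero.mp h1 with h2 | h2
      · exact two_ne_zero h2
      · exact hrt0 h2
    · exact haw0 h1
  -- coefficients
  obtain ⟨K, hKDef⟩ : ∃ K : ℂ, K = (1 - w) / (w * aw) := ⟨_, rfl⟩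
  obtain ⟨s, hsDef⟩ : ∃ s : ℂ, s = 4*(1+(a:ℂ))/aw := ⟨_, rfl⟩
  obtain ⟨Cp, hCpDef⟩ : ∃ Cp : ℂ, Cp = K * s * zp / (zp - zm) := ⟨_, rfl⟩
  obtain ⟨Cm, hCmDef⟩ : ∃ Cm : ℂ, Cm = -(K * s * zm / (zp - zm)) := ⟨_, rfl⟩
  -- pointwise identity
  have hpt : ∀ x : ℝ, Theta a (y - x) x
      = K + Cp * (Complex.exp (2 * (π:ℂ) * Complex.I * x) - zp)⁻¹
          + Cm * (Complex.exp (2 * (π:ℂ) * Complex.I * x) - zm)⁻¹ := by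
    intro x
    set z : ℂ := Complex.exp (2 * (π:ℂ) * Complex.I * x) with hzDef
    have hz0 : z ≠ 0 := Complex.exp_ne_zero _
    have habsz : Complex.abs z = 1 := expz_abs x
    have hzzp : z - zp ≠ 0 := by
      rw [sub_ne_zero]; intro h; rw [← h, habsz] at habszp; linarith
    have hzzm : z - zm ≠ 0 := by
      rw [sub_ne_zero]; intro h; rw [← h, habsz] at habszm; linarith
    have hlam := lam_exp y x w z hw hzDef
    have hom := om_exp y x w z hw hzDef
    have hTheta : Theta a (y - x) x
        = (Complex.I * ((Om (y - x) x : ℝ) : ℂ)) /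
          ((1 + (a:ℂ)) * ((Lam (y - x) x : ℝ) : ℂ) - Complex.I * ((Om (y - x) x : ℝ) : ℂ)) := by
      rw [Theta]; norm_cast
    have hfac2 : (z - zp) * (z - zm) = z^2 - (4*(1+(a:ℂ))/aw)*z + w := by
      rw [show z^2 - (4*(1+(a:ℂ))/aw)*z + w = z^2 - (zp + zm)*z + zp*zm from by
        rw [hsum, hprod]]
      ring
    have hDfac : (1 + (a:ℂ)) * (4 - w*z⁻¹ - z*w⁻¹ - z - z⁻¹) - (w*z⁻¹ - z*w⁻¹ + z - z⁻¹)
        = -(aw * z⁻¹) * ((z - zp) * (z - zm)) := by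
      have hS : (2 + (a:ℂ)*(1+w⁻¹)) * (4*(1+(a:ℂ))/aw) = 4*(1+(a:ℂ)) := by
        rw [← hawval]
        field_simp
      have := Dfac_aux (a:ℂ) w w⁻¹ z z⁻¹ (4*(1+(a:ℂ))/aw) zp zm
        (mul_inv_cancel₀ hw0) (mul_inv_cancel₀ hz0) hS hfac2
      rw [hawval]
      exact this
    have hN : w*z⁻¹ - z*w⁻¹ + z - z⁻¹ = ((z - zp)*(z - zm) + s*z) * (w-1) * (w*z)⁻¹ := by
      rw [hsDef, hfac2]
      field_simp
      ring
    have hA : ∀ q : ℂ, q ≠ 0 → ((q + s*z) * (w-1) * (w*z)⁻¹) / (-(aw*z⁻¹)*q) = K * (1 + s*z/q) := by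
      intro q hq
      rw [hKDef]
      field_simp
      ring
    rw [hTheta, hlam, hom, hDfac, hN, hA ((z - zp)*(z - zm)) (mul_ne_zero hzzp hzzm)]
    rw [hCpDef, hCmDef]
    have hzpzm' : zp - zm ≠ 0 := sub_ne_zero.mpr hzpzm
    field_simp
    ring
  -- rewrite the integral
  have hnezp : ∀ x : ℝ, Complex.exp (2*(π:ℂ)*Complex.I*x) - zp ≠ 0 := by
    intro x h
    rw [sub_eq_zero] at h
    rw [← h, expz_abs x] at habszp; linarith
  have hnezm : ∀ x : ℝ, Complex.exp (2*(π:ℂ)*Complex.I*x) - zm ≠ 0 := by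
    intro x h
    rw [sub_eq_zero] at h
    rw [← h, expz_abs x] at habszm; linarith
  have hcexp : Continuous fun x : ℝ => Complex.exp (2*(π:ℂ)*Complex.I*x) :=
    Complex.continuous_exp.comp (continuous_const.mul Complex.continuous_ofReal)
  have hcontp : Continuous fun x : ℝ => Cp * (Complex.exp (2*(π:ℂ)*Complex.I*x) - zp)⁻¹ :=
    continuous_const.mul (Continuous.inv₀ (hcexp.sub continuous_const) hnezp)
  have hcontm : Continuous fun x : ℝ => Cm * (Complex.exp (2*(π:ℂ)*Complex.I*x) - zm)⁻¹ :=
    continuous_const.mul (Continuous.inv₀ (hcexp.sub continuous_const) hnezm)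
  have hint : (∫ x in (-(1:ℝ)/2)..(1/2), Theta a (y - x) x)
      = ∫ x in (-(1:ℝ)/2)..(1/2), (K + Cp * (Complex.exp (2*(π:ℂ)*Complex.I*x) - zp)⁻¹
          + Cm * (Complex.exp (2*(π:ℂ)*Complex.I*x) - zm)⁻¹) :=
    intervalIntegral.integral_congr (fun x _ => hpt x)
  rw [hint]
  rw [intervalIntegral.integral_add
      (intervalIntegrable_const.add (hcontp.intervalIntegrable _ _))
      (hcontm.intervalIntegrable _ _),
    intervalIntegral.integral_add intervalIntegrable_const (hcontp.intervalIntegrable _ _)]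
  rw [intervalIntegral.integral_const, intervalIntegral.integral_const_mul,
    intervalIntegral.integral_const_mul]
  rw [int_outer zp habszp, int_inner zm hzm0 habszm]
  rw [show ((1:ℝ)/2 - (-(1:ℝ)/2)) = (1:ℝ) from by norm_num, one_smul]
  rw [← hawDef, ← hdlDef, ← hrtDef]
  have t1 : Cp * -zp⁻¹ = -(K*s*aw/(2*rt)) := by
    rw [hCpDef, hdiff]
    field_simp [hzp0, hrt0, haw0]
  rw [t1, mul_zero, add_zero, hKDef, hsDef]
  push_cast
  have h1 : (1 - w) / (w * aw) * (4*(1+(a:ℂ))/aw) * aw / (2*rt)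
      = (1 - w) / (w * aw) * (2*(1+(a:ℂ))/rt) := by
    field_simp
    ring
  rw [h1]
  ring
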